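/- arXiv:2506.18085 — 2 statements merged into one kernel-verified Lean document; each statement's English description precedes it below -/
import Mathlib

section
/- For the natural 2-dimensional representation σ_n of O(2) (pulled back along O(2) → O(2)/C_n) and the dihedral subgroup D_{2t} with Weyl group W_t = N_{O(2)}(D_{2t})/D_{2t} = D_{4t}/D_{2t} ≅ ℤ/2: the fixed-point representation σ_n^{D_{2t}} of W_t is the trivial 1-dimensional representation if 2t | n, the sign representation if t | n but 2t ∤ n, and zero if t ∤ n. -/
/-!
STATEMENT 9: For the 2-dimensional representation σ_n of O(2) (pulled back along
O(2) → O(2)/C_n) and the dihedral subgroup D_{2t} with Weyl group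
W_t = N_{O(2)}(D_{2t})/D_{2t} = D_{4t}/D_{2t} ≅ ℤ/2: the fixed-point representation
σ_n^{D_{2t}} of W_t is the trivial 1-dimensional representation if 2t | n, the sign
representation if t | n but 2t ∤ n, and zero if t ∤ n.

Formalization: D_{2t} consists of the rotations R(2πk/t) and reflections S(2πk/t); under
σ_n these act by R(n·2πk/t) and S(n·2πk/t).  A generator of the Weyl group D_{4t}/D_{2t}
is represented by the rotation R(π/t) ∈ D_{4t}, which acts on the fixed space via
σ_n(R(π/t)) = R(nπ/t).  The claims: the fixed space is zero if t ∤ n; it is 1-dimensional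
if t | n; on it the Weyl generator acts as +1 if 2t | n and as −1 if t | n but 2t ∤ n.
-/

noncomputable section
open Matrix Real

/-- Rotation through θ. -/
def Rot (θ : ℝ) : Matrix (Fin 2) (Fin 2) ℝ := !![cos θ, -sin θ; sin θ, cos θ]

/-- Reflection in the line at angle θ/2. -/
def Ref (θ : ℝ) : Matrix (Fin 2) (Fin 2) ℝ := !![cos θ, sin θ; sin θ, -cos θ]

/-- The common fixed subspace of a set of matrices acting on ℝ². -/
def fixR (S : Set (Matrix (Fin 2) (Fin 2) ℝ)) : Submodule ℝ (Fin 2 → ℝ) :=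
  ⨅ A ∈ S, LinearMap.ker (Matrix.mulVecLin A - LinearMap.id)

/-- The image of the dihedral group D_{2t} under σ_n. -/
def sigmaDih (n t : ℕ) : Set (Matrix (Fin 2) (Fin 2) ℝ) :=
  (Set.range fun k : ℤ => Rot (n * (2 * π * k / t))) ∪
    Set.range fun k : ℤ => Ref (n * (2 * π * k / t))

lemma mem_fixR {S : Set (Matrix (Fin 2) (Fin 2) ℝ)} {v : Fin 2 → ℝ} :
    v ∈ fixR S ↔ ∀ A ∈ S, A.mulVec v = v := by
  simp only [fixR, Submodule.mem_iInf, LinearMap.mem_ker, LinearMap.sub_apply, Matrix.mulVecLin_apply,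
    LinearMap.id_apply, sub_eq_zero]

lemma rot_mulVec (θ : ℝ) (v : Fin 2 → ℝ) :
    (Rot θ).mulVec v = ![cos θ * v 0 - sin θ * v 1, sin θ * v 0 + cos θ * v 1] := by
  funext i
  fin_cases i <;> simp [Rot, Matrix.mulVec, dotProduct, Fin.sum_univ_two, vecHead, vecTail] <;> ring

lemma ref_mulVec (θ : ℝ) (v : Fin 2 → ℝ) :
    (Ref θ).mulVec v = ![cos θ * v 0 + sin θ * v 1, sin θ * v 0 - cos θ * v 1] := by
  funext i
  fin_cases i <;> simp [Ref, Matrix.mulVec, dotProduct, Fin.sum_univ_two, vecHead, vecTail] <;> ring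

lemma rot_mem (n t : ℕ) (k : ℤ) : Rot ((n : ℝ) * (2 * π * k / t)) ∈ sigmaDih n t :=
  Or.inl ⟨k, rfl⟩

lemma ref_mem (n t : ℕ) (k : ℤ) : Ref ((n : ℝ) * (2 * π * k / t)) ∈ sigmaDih n t :=
  Or.inr ⟨k, rfl⟩

-- when t | n, all dihedral angles are integer multiples of 2π
lemma angle_eq {n t : ℕ} (ht : 1 ≤ t) {m : ℕ} (hm : n = t * m) (k : ℤ) :
    (n : ℝ) * (2 * π * k / t) = ((m * k : ℤ) : ℝ) * (2 * π) := by
  have ht' : (t : ℝ) ≠ 0 := by positivity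
  subst hm; push_cast; field_simp

lemma fix_eq_span {n t : ℕ} (ht : 1 ≤ t) (hdvd : t ∣ n) :
    fixR (sigmaDih n t) = Submodule.span ℝ {![(1:ℝ), 0]} := by
  obtain ⟨m, hm⟩ := hdvd
  ext v
  rw [mem_fixR, Submodule.mem_span_singleton]
  constructor
  · intro h
    have href := h _ (ref_mem n t 1)
    rw [angle_eq ht hm 1, ref_mulVec, cos_int_mul_two_pi] at href
    have hs : sin (((m * 1 : ℤ) : ℝ) * (2 * π)) = 0 := by
      have : ((m * 1 : ℤ) : ℝ) * (2 * π) = ((2 * m : ℤ) : ℝ) * π := by push_cast; ring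
      rw [this, sin_int_mul_pi]
    rw [hs] at href
    have h1 : v 1 = 0 := by
      have := congrFun href 1
      simp at this
      linarith
    refine ⟨v 0, ?_⟩
    funext i
    fin_cases i <;> simp [h1]
  · rintro ⟨a, rfl⟩ A hA
    have key : ∀ k : ℤ, cos ((n : ℝ) * (2 * π * k / t)) = 1 ∧
        sin ((n : ℝ) * (2 * π * k / t)) = 0 := by
      intro k
      rw [angle_eq ht hm k]
      refine ⟨cos_int_mul_two_pi _, ?_⟩
      have : ((m * k : ℤ) : ℝ) * (2 * π) = ((2 * (m * k) : ℤ) : ℝ) * π := by push_cast; ring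
      rw [this, sin_int_mul_pi]
    rcases hA with ⟨k, rfl⟩ | ⟨k, rfl⟩
    · rw [rot_mulVec, (key k).1, (key k).2]
      funext i; fin_cases i <;> simp
    · rw [ref_mulVec, (key k).1, (key k).2]
      funext i; fin_cases i <;> simp

theorem weyl_action_on_dihedral_fixed_points
    (n t : ℕ) (hn : 1 ≤ n) (ht : 1 ≤ t) :
    (¬ t ∣ n → fixR (sigmaDih n t) = ⊥) ∧
    (t ∣ n → Module.finrank ℝ ↥(fixR (sigmaDih n t)) = 1) ∧
    ((2 * t) ∣ n → ∀ v ∈ fixR (sigmaDih n t), (Rot (n * (π / t))).mulVec v = v) ∧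
    (t ∣ n → ¬ (2 * t) ∣ n → ∀ v ∈ fixR (sigmaDih n t), (Rot (n * (π / t))).mulVec v = -v) := by
  have ht' : (t : ℝ) ≠ 0 := by positivity
  refine ⟨?_, ?_, ?_, ?_⟩
  · -- t ∤ n : fixed space is zero
    intro hndvd
    rw [eq_bot_iff]
    intro v hv
    rw [mem_fixR] at hv
    have hrot := hv _ (rot_mem n t 1)
    set θ := (n : ℝ) * (2 * π * ((1 : ℤ) : ℝ) / t) with hθ
    have hc : cos θ ≠ 1 := by
      intro hc1
      rcases (cos_eq_one_iff θ).1 hc1 with ⟨j, hj⟩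
      apply hndvd
      have hj' : (j : ℝ) * t = n := by
        rw [hθ] at hj; field_simp at hj; push_cast at hj
        have hπ : (2 : ℝ) * π ≠ 0 := by positivity
        nlinarith [pi_pos]
      have : ((j * t : ℤ) : ℝ) = ((n : ℤ) : ℝ) := by push_cast; linarith
      have hjt : (j * t : ℤ) = (n : ℤ) := by exact_mod_cast this
      have : (t : ℤ) ∣ (n : ℤ) := ⟨j, by linarith [hjt]⟩
      exact_mod_cast this
    rw [rot_mulVec] at hrot
    have h0 := congrFun hrot 0
    have h1 := congrFun hrot 1
    simp at h0 h1
    have pyth := sin_sq_add_cos_sq θ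
    have hclt : cos θ < 1 := lt_of_le_of_ne (cos_le_one θ) hc
    have hne : (2 : ℝ) - 2 * cos θ ≠ 0 := by linarith
    have key0 : (2 - 2 * cos θ) * v 0 = 0 := by
      linear_combination (cos θ - 1) * h0 + sin θ * h1 - v 0 * pyth
    have key1 : (2 - 2 * cos θ) * v 1 = 0 := by
      linear_combination (-sin θ) * h0 + (cos θ - 1) * h1 - v 1 * pyth
    have hv0 : v 0 = 0 := (mul_eq_zero.1 key0).resolve_left hne
    have hv1 : v 1 = 0 := (mul_eq_zero.1 key1).resolve_left hne
    simp [Submodule.mem_bot]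
    funext i; fin_cases i <;> simp [hv0, hv1]
  · -- t ∣ n : fixed space is 1-dimensional
    intro hdvd
    rw [fix_eq_span ht hdvd]
    refine finrank_span_singleton ?_
    intro h
    have := congrFun h 0
    simp at this
  · -- 2t ∣ n : generator acts as +1
    rintro ⟨m, hm⟩ v _
    have hang : (n : ℝ) * (π / t) = ((m : ℤ) : ℝ) * (2 * π) := by
      subst hm; push_cast; field_simp
    rw [rot_mulVec, hang, cos_int_mul_two_pi]
    have hs : sin (((m : ℤ) : ℝ) * (2 * π)) = 0 := by
      have : ((m : ℤ) : ℝ) * (2 * π) = ((2 * m : ℤ) : ℝ) * π := by push_cast; ring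
      rw [this, sin_int_mul_pi]
    rw [hs]
    funext i; fin_cases i <;> simp
  · -- t ∣ n, 2t ∤ n : generator acts as −1
    intro hdvd hndvd v _
    obtain ⟨m, hm⟩ := hdvd
    have hmodd : ∃ j, m = 2 * j + 1 := by
      rcases Nat.even_or_odd m with ⟨j, hj⟩ | ⟨j, hj⟩
      · exact absurd ⟨j, by rw [hm, hj]; ring⟩ hndvd
      · exact ⟨j, hj⟩
    obtain ⟨j, hj⟩ := hmodd
    have hang : (n : ℝ) * (π / t) = ((j : ℤ) : ℝ) * (2 * π) + π := by
      subst hm hj; push_cast; field_simp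
    rw [rot_mulVec, hang, cos_int_mul_two_pi_add_pi]
    have hs : sin (((j : ℤ) : ℝ) * (2 * π) + π) = 0 := by
      have : ((j : ℤ) : ℝ) * (2 * π) + π = ((2 * j + 1 : ℤ) : ℝ) * π := by push_cast; ring
      rw [this, sin_int_mul_pi]
    rw [hs]
    funext i; fin_cases i <;> simp
end
end

section
/- Let O = ∏_{s≥1} ℚ[c] (graded, c of degree −2), let E ⊆ O be the multiplicative set of Euler classes c^v = (c^{v(s)})_s for functions v : ℕ≥1 → ℕ that are zero almost everywhere, let t = E^{−1}O, and define 𝕀 by the exact sequence 0 → O → t → 𝕀 → 0. Then 𝕀 ≅ ⊕_{s≥1} I_s, where I_s ≅ ℚ[c,c^{−1}]/ℚ[c] is the copy of the torsion module I in the s-th factor; in particular the quotient of the localization by the product is a direct sum, not a product. -/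
/-!
STATEMENT 19: Let O = ∏_{s≥1} ℚ[c] (graded, c of degree −2), let E ⊆ O be the multiplicative
set of Euler classes c^v = (c^{v(s)})_s for functions v : ℕ≥1 → ℕ that are zero almost
everywhere, let t = E⁻¹O, and define 𝕀 by the exact sequence 0 → O → t → 𝕀 → 0.  Then
𝕀 ≅ ⊕_{s≥1} I_s, where I_s ≅ ℚ[c,c⁻¹]/ℚ[c] is the copy of the torsion module I in the s-th
factor; in particular the quotient of the localization by the product is a direct sum, not a
product.

Formalization: O is the product, indexed by the subgroups C_s, of copies of ℚ[X]; E is the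
submonoid of tuples (X^{v s})_s with v finitely supported; t is the localization of O at E;
𝕀 is the quotient of t by the image of O.  Each I_s is the ℚ[X]-module ℚ[X,X⁻¹]/ℚ[X]
(modelled by Laurent polynomials modulo polynomials), viewed as an O-module through
evaluation of the s-th coordinate.  The claim is an isomorphism of O-modules
𝕀 ≅ ⊕_s I_s (O-linearity automatically matches the s-th summand with the part of 𝕀
supported at the s-th factor, via the idempotents of O).
-/

noncomputable section

open Polynomial DirectSum

/-- `O = ∏_s ℚ[c]`: the ring of functions on the set of finite subgroups. -/
abbrev ORing : Type := ℕ → Polynomial ℚ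

/-- The multiplicative set of Euler classes `c^v`, for `v` finitely supported. -/
def eulerClasses : Submonoid ORing where
  carrier := {f | ∃ v : ℕ →₀ ℕ, f = fun s => Polynomial.X ^ (v s)}
  one_mem' := ⟨0, by funext s; simp⟩
  mul_mem' := by
    rintro a b ⟨v, rfl⟩ ⟨w, rfl⟩
    exact ⟨v + w, by funext s; simp [pow_add]⟩

/-- `t = E⁻¹O`, the Tate ring. -/
abbrev tRing := Localization eulerClasses

/-- `𝕀 = t/O`, the cokernel of `O → t`. -/
def II := tRing ⧸ LinearMap.range (Algebra.linearMap ORing tRing)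

instance : AddCommGroup II :=
  inferInstanceAs (AddCommGroup (tRing ⧸ LinearMap.range (Algebra.linearMap ORing tRing)))
instance : Module ORing II :=
  inferInstanceAs (Module ORing (tRing ⧸ LinearMap.range (Algebra.linearMap ORing tRing)))

/-- The image of ℚ[c] in ℚ[c,c⁻¹], as a ℚ[c]-submodule. -/
def polyImage : Submodule (Polynomial ℚ) (LaurentPolynomial ℚ) :=
  LinearMap.range (Algebra.linearMap (Polynomial ℚ) (LaurentPolynomial ℚ))

/-- `I_s = ℚ[c,c⁻¹]/ℚ[c]`: the copy of the torsion module I for the s-th factor of O. -/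
def Icomp (_s : ℕ) := LaurentPolynomial ℚ ⧸ polyImage

instance (s : ℕ) : AddCommGroup (Icomp s) :=
  inferInstanceAs (AddCommGroup (LaurentPolynomial ℚ ⧸ polyImage))

instance (s : ℕ) : Module (Polynomial ℚ) (Icomp s) :=
  inferInstanceAs (Module (Polynomial ℚ) (LaurentPolynomial ℚ ⧸ polyImage))

/-- `I_s` is an O-module through evaluation of the s-th coordinate. -/
instance (s : ℕ) : Module ORing (Icomp s) :=
  Module.compHom _ (Pi.evalRingHom (fun _ => Polynomial ℚ) s)


namespace TateAux

open LaurentPolynomial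

abbrev L := LaurentPolynomial ℚ

/-- Coordinatewise inclusion `O → ∏ ℚ[c,c⁻¹]`. -/
def φ : ORing →+* (ℕ → L) :=
  Pi.ringHom fun s => Polynomial.toLaurent.comp (Pi.evalRingHom (fun _ => Polynomial ℚ) s)

lemma φ_apply (f : ORing) (s : ℕ) : φ f s = Polynomial.toLaurent (f s) := rfl

lemma isUnit_φ (e : eulerClasses) : IsUnit (φ (e : ORing)) := by
  obtain ⟨v, hv⟩ := e.2
  refine IsUnit.of_mul_eq_one (fun s => T (-(v s : ℤ))) ?_
  funext s
  show φ (e : ORing) s * T (-(v s : ℤ)) = 1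
  rw [φ_apply, hv]
  rw [Polynomial.toLaurent_X_pow, ← T_add, add_neg_cancel, T_zero]

def ψ : tRing →+* (ℕ → L) := IsLocalization.lift (M := eulerClasses) isUnit_φ

lemma ψ_alg (f : ORing) : ψ (algebraMap ORing tRing f) = φ f :=
  IsLocalization.lift_eq _ _

lemma ψ_mk (f : ORing) (e : eulerClasses) :
    ψ (Localization.mk f e) * φ (e : ORing) = φ f := by
  rw [Localization.mk_eq_mk', ← ψ_alg (e : ORing), ← ψ_alg f, ← map_mul]
  congr 1
  exact IsLocalization.mk'_spec _ f e

lemma ψ_smul (r : ORing) (x : tRing) : ψ (r • x) = φ r * ψ x := by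
  refine Localization.induction_on x ?_
  rintro ⟨f, e⟩
  rw [Localization.smul_mk]
  refine (isUnit_φ e).mul_right_cancel ?_
  rw [mul_assoc, ψ_mk, ψ_mk, ← map_mul, smul_eq_mul, map_mul]

lemma mk_surj (x : tRing) : ∃ (f : ORing) (e : eulerClasses), x = Localization.mk f e :=
  Localization.induction_on x fun p => ⟨p.1, p.2, rfl⟩

/-- The main map `t → ∏ I_s`. -/
def Fmap : tRing →ₗ[ORing] (∀ s : ℕ, Icomp s) where
  toFun x s := Submodule.Quotient.mk (ψ x s)
  map_add' x y := by
    funext s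
    show Submodule.Quotient.mk (p := polyImage) (ψ (x + y) s) = Submodule.Quotient.mk (p := polyImage) (ψ x s) + Submodule.Quotient.mk (p := polyImage) (ψ y s)
    rw [map_add]
    rfl
  map_smul' r x := by
    funext s
    show Submodule.Quotient.mk (p := polyImage) (ψ (r • x) s) = r s • Submodule.Quotient.mk (p := polyImage) (ψ x s)
    rw [ψ_smul, ← Submodule.Quotient.mk_smul]
    congr 1

lemma Fmap_apply (x : tRing) (s : ℕ) : Fmap x s = Submodule.Quotient.mk (ψ x s) := rfl

lemma ker_Fmap : LinearMap.ker Fmap = LinearMap.range (Algebra.linearMap ORing tRing) := by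
  ext x
  simp only [LinearMap.mem_ker, LinearMap.mem_range]
  constructor
  · intro hx
    obtain ⟨f, e, rfl⟩ := mk_surj x
    have hmem : ∀ s : ℕ, ∃ g : Polynomial ℚ, Polynomial.toLaurent g = ψ (Localization.mk f e) s := by
      intro s
      have h0 : Fmap (Localization.mk f e) s = 0 := by rw [hx]; rfl
      rw [Fmap_apply] at h0
      exact (Submodule.Quotient.mk_eq_zero _).mp h0
    choose g hg using hmem
    refine ⟨g, ?_⟩
    have hfe : (e : ORing) * g = f := by
      funext s
      apply Polynomial.toLaurent_injective
      have := congrFun (ψ_mk f e) s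
      rw [Pi.mul_apply, φ_apply, φ_apply, ← hg s] at this
      rw [Pi.mul_apply, map_mul]
      rw [mul_comm] at this
      exact this
    rw [Algebra.linearMap_apply, Localization.mk_eq_mk', ← hfe]
    exact (IsLocalization.mk'_mul_cancel_left g e).symm
  · rintro ⟨g, rfl⟩
    funext s
    show Fmap (algebraMap ORing tRing g) s = 0
    rw [Fmap_apply, ψ_alg]
    exact (Submodule.Quotient.mk_eq_zero _).mpr ⟨g s, rfl⟩

/-- The inclusion of the direct sum into the product. -/
def incl : (⨁ s : ℕ, Icomp s) →ₗ[ORing] (∀ s : ℕ, Icomp s) where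
  toFun x s := x s
  map_add' x y := by funext s; simp
  map_smul' r x := by funext s; exact DirectSum.smul_apply r x s

lemma incl_injective : Function.Injective incl := by
  intro a b h
  exact DFinsupp.ext fun s => congrFun h s

lemma range_Fmap : LinearMap.range Fmap = LinearMap.range incl := by
  apply le_antisymm
  · rintro _ ⟨x, rfl⟩
    obtain ⟨f, e, rfl⟩ := mk_surj x
    obtain ⟨v, hv⟩ := e.2
    set x := Localization.mk f e with hxdef
    have hzero : ∀ s : ℕ, s ∉ v.support → Fmap x s = 0 := by
      intro s hs
      have hv0 : v s = 0 := Finsupp.notMem_support_iff.mp hs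
      have := congrFun (ψ_mk f e) s
      rw [Pi.mul_apply, φ_apply, φ_apply, hv] at this
      simp only [hv0, pow_zero, map_one, mul_one] at this
      rw [Fmap_apply, this]
      exact (Submodule.Quotient.mk_eq_zero _).mpr ⟨f s, rfl⟩
    refine ⟨DirectSum.mk (fun s => Icomp s) v.support (fun s => Fmap x s.1), ?_⟩
    funext s
    show (DirectSum.mk (fun s => Icomp s) v.support (fun s => Fmap x s.1)) s = Fmap x s
    by_cases hs : s ∈ v.support
    · rw [DirectSum.mk_apply_of_mem hs]
    · rw [DirectSum.mk_apply_of_notMem hs, hzero s hs]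
  · rintro _ ⟨d, rfl⟩
    induction d using DirectSum.induction_on with
    | zero => exact ⟨0, by rw [map_zero, map_zero]⟩
    | of s m =>
      obtain ⟨l, rfl⟩ := Submodule.Quotient.mk_surjective _ m
      obtain ⟨n, p, hp⟩ := exists_T_pow l
      set e : eulerClasses := ⟨fun s' => Polynomial.X ^ ((Finsupp.single s n) s'), ⟨Finsupp.single s n, rfl⟩⟩ with he
      refine ⟨Localization.mk (Pi.single s p) e, ?_⟩
      funext s'
      have key := congrFun (ψ_mk (Pi.single s p) e) s'
      rw [Pi.mul_apply, φ_apply, φ_apply] at key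
      show Fmap (Localization.mk (Pi.single s p) e) s'
          = (DirectSum.of (fun s => Icomp s) s (Submodule.Quotient.mk l)) s'
      by_cases hs : s' = s
      · subst hs
        rw [DirectSum.of_eq_same (β := fun s => Icomp s) s' (Submodule.Quotient.mk l), Fmap_apply]
        congr 1
        have he1 : (e : ORing) s' = Polynomial.X ^ n := by
          show Polynomial.X ^ ((Finsupp.single s' n) s') = _
          rw [Finsupp.single_eq_same]
        rw [he1, Pi.single_eq_same, Polynomial.toLaurent_X_pow, hp] at key
        have hT : IsUnit (T n : L) := isUnit_T n
        exact hT.mul_right_cancel key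
      · rw [DirectSum.of_eq_of_ne (β := fun s => Icomp s) s s' (Submodule.Quotient.mk l) hs, Fmap_apply]
        have he1 : (e : ORing) s' = 1 := by
          show Polynomial.X ^ ((Finsupp.single s n) s') = _
          rw [Finsupp.single_eq_of_ne hs, pow_zero]
        rw [he1, map_one, mul_one, Pi.single_eq_of_ne hs, map_zero] at key
        rw [key]
        exact (Submodule.Quotient.mk_eq_zero _).mpr (zero_mem _)
    | add a b ha hb =>
      rw [map_add]
      exact Submodule.add_mem _ ha hb

end TateAux

theorem tate_cokernel_is_direct_sum_of_torsion_modules :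
    Nonempty (II ≃ₗ[ORing] (⨁ s : ℕ, Icomp s)) := by
  refine ⟨?_⟩
  have e1 : (tRing ⧸ LinearMap.range (Algebra.linearMap ORing tRing)) ≃ₗ[ORing]
      (tRing ⧸ LinearMap.ker TateAux.Fmap) :=
    Submodule.Quotient.equiv _ _ (LinearEquiv.refl _ _) (by rw [TateAux.ker_Fmap]; ext x; simp)
  have e2 : (tRing ⧸ LinearMap.ker TateAux.Fmap) ≃ₗ[ORing] LinearMap.range TateAux.Fmap :=
    TateAux.Fmap.quotKerEquivRange
  have e3 : (LinearMap.range TateAux.Fmap : Submodule ORing _) ≃ₗ[ORing]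
      (LinearMap.range TateAux.incl : Submodule ORing _) :=
    LinearEquiv.ofEq _ _ TateAux.range_Fmap
  have e4 : (LinearMap.range TateAux.incl : Submodule ORing _) ≃ₗ[ORing] (⨁ s : ℕ, Icomp s) :=
    (LinearEquiv.ofInjective TateAux.incl TateAux.incl_injective).symm
  exact ((e1.trans e2).trans e3).trans e4
end
end
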